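/- Let α : ℝ → ℝ be monotone (nondecreasing), let c ∈ ℝ, and let y : ℝ → ℝ be differentiable with y'(t) ≤ −α(y(t)) + c for all t ≥ 0. Suppose b ∈ ℝ satisfies α(b) > c and y(0) > b. Then y(t) ≤ b for all t ≥ (y(0) − b)/(α(b) − c); i.e., the trajectory enters the sublevel set {y ≤ b} in finite time bounded explicitly by (y(0) − b)/(α(b) − c), and remains in it thereafter. -/

import Mathlib

/-- Comparison-type finite-time attractivity lemma. If `α` is monotone,
`y` is differentiable with `y' t ≤ -α (y t) + c` for all `t ≥ 0`, and `b` satisfies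
`α b > c` and `y 0 > b`, then `y t ≤ b` for all `t ≥ (y 0 - b)/(α b - c)`: the
trajectory enters the sublevel set `{y ≤ b}` within this explicit time and stays there. -/
theorem sublevel_finite_time_attractive
    (α : ℝ → ℝ) (hα : Monotone α) (c : ℝ)
    (y : ℝ → ℝ) (hy : Differentiable ℝ y)
    (hdiff : ∀ t : ℝ, 0 ≤ t → deriv y t ≤ -α (y t) + c)
    (b : ℝ) (hb : c < α b) (h0 : b < y 0) :
    ∀ t : ℝ, (y 0 - b) / (α b - c) ≤ t → y t ≤ b := by
  set k := α b - c with hk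
  have hkpos : 0 < k := sub_pos.2 hb
  set T := (y 0 - b) / k with hTdef
  have hT : 0 < T := div_pos (sub_pos.2 h0) hkpos
  -- persistence: once below b (at a nonnegative time), stay below b
  have persist : ∀ t0 t : ℝ, 0 ≤ t0 → t0 ≤ t → y t0 ≤ b → y t ≤ b := by
    intro t0 t ht0 htt hyt0
    by_contra hbt
    push_neg at hbt
    set A : Set ℝ := Set.Icc t0 t ∩ y ⁻¹' Set.Iic b with hA
    have hne : A.Nonempty := ⟨t0, ⟨le_refl _, htt⟩, hyt0⟩
    have hbdd : BddAbove A := ⟨t, fun s hs => hs.1.2⟩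
    set t1 := sSup A with ht1def
    have hA_closed : IsClosed A :=
      isClosed_Icc.inter (isClosed_Iic.preimage hy.continuous)
    have ht1A : t1 ∈ A := hA_closed.csSup_mem hne hbdd
    have ht1b : y t1 ≤ b := ht1A.2
    have ht01 : t0 ≤ t1 := ht1A.1.1
    have ht1t : t1 < t := lt_of_le_of_ne ht1A.1.2 (by
      intro h; rw [h] at ht1b; exact absurd ht1b (not_le.2 hbt))
    have hmid : ∀ s ∈ Set.Ioo t1 t, b < y s := by
      intro s hs
      by_contra hsb
      push_neg at hsb
      have hsA : s ∈ A := ⟨⟨le_trans ht01 hs.1.le, hs.2.le⟩, hsb⟩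
      exact absurd (le_csSup hbdd hsA) (not_le.2 hs.1)
    have hanti : AntitoneOn y (Set.Icc t1 t) := by
      apply antitoneOn_of_deriv_nonpos (convex_Icc _ _) hy.continuous.continuousOn
        hy.differentiableOn
      intro s hs
      rw [interior_Icc] at hs
      have hbs : b < y s := hmid s hs
      have h1 : deriv y s ≤ -α (y s) + c :=
        hdiff s (le_trans ht0 (le_trans ht01 hs.1.le))
      have h2 : α b ≤ α (y s) := hα hbs.le
      linarith
    have : y t ≤ y t1 :=
      hanti ⟨le_refl _, ht1t.le⟩ ⟨ht1t.le, le_refl _⟩ ht1t.le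
    linarith
  intro t ht
  have hent : ∃ s, 0 ≤ s ∧ s ≤ T ∧ y s ≤ b := by
    by_contra h
    push_neg at h
    have hg : AntitoneOn (fun s => y s + k * s) (Set.Icc 0 T) := by
      apply antitoneOn_of_deriv_nonpos (convex_Icc _ _)
        ((hy.continuous.add (continuous_const.mul continuous_id)).continuousOn)
        ((by fun_prop : Differentiable ℝ fun s => y s + k * s).differentiableOn)
      intro s hs
      rw [interior_Icc] at hs
      have hd : deriv (fun s => y s + k * s) s = deriv y s + k := by
        have := ((hy s).hasDerivAt.add ((hasDerivAt_id s).const_mul k)).deriv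
        simp only [mul_one] at this; exact this
      show deriv (fun s => y s + k * s) s ≤ 0
      rw [hd, hk]
      have h1 := hdiff s hs.1.le
      have h2 : α b ≤ α (y s) := hα (h s hs.1.le hs.2.le).le
      linarith
    have hle : y T + k * T ≤ y 0 + k * 0 :=
      hg (Set.left_mem_Icc.2 hT.le) (Set.right_mem_Icc.2 hT.le) hT.le
    have hkT : k * T = y 0 - b := by
      rw [hTdef, mul_div_cancel₀ _ hkpos.ne']
    have hTb := h T hT.le le_rfl
    linarith
  obtain ⟨s, hs0, hsT, hsb⟩ := hent
  exact persist s t hs0 (le_trans hsT ht) hsb
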